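/- Let w, w_B be weight functions on a finite edge set E with w_B(e) = (1 + (B-1)(1-p_e))w(e) for p_e ∈ [0,1] and B ≥ 1, and let C* ⊆ E with w(C*) > 0. If Σ_{e∈E∖C*} p_e w(e) ≤ ρ·w(C*) and Σ_{e∈C*}(1-p_e)w(e) = η·w(C*), then w_B(E) ≥ B·w(E) - (B-1)(ρ + 1 - η)·w(C*). -/

import Mathlib

theorem stmt_7 {α : Type*} [DecidableEq α] (E : Finset α) (C : Finset α) (hC : C ⊆ E)
    (w : α → ℝ) (hw : ∀ e ∈ E, 0 ≤ w e)
    (p : α → ℝ) (hp0 : ∀ e, 0 ≤ p e) (hp1 : ∀ e, p e ≤ 1)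
    (B η ρ : ℝ) (hB : 1 ≤ B) (hCpos : 0 < ∑ e ∈ C, w e)
    (wB : α → ℝ) (hwB : ∀ e, wB e = (1 + (B - 1) * (1 - p e)) * w e)
    (hfp : (∑ e ∈ E \ C, p e * w e) ≤ ρ * ∑ e ∈ C, w e)
    (hη : (∑ e ∈ C, (1 - p e) * w e) = η * ∑ e ∈ C, w e) :
    (∑ e ∈ E, wB e) ≥ B * (∑ e ∈ E, w e) - (B - 1) * (ρ + 1 - η) * ∑ e ∈ C, w e := by
  have hwBsum : (∑ e ∈ E, wB e)
      = (∑ e ∈ E, w e) + (B - 1) * ∑ e ∈ E, (1 - p e) * w e := by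
    rw [Finset.mul_sum, ← Finset.sum_add_distrib]
    exact Finset.sum_congr rfl fun e _ => by rw [hwB e]; ring
  have hsplit1 : (∑ e ∈ E \ C, (1 - p e) * w e) + ∑ e ∈ C, (1 - p e) * w e
      = ∑ e ∈ E, (1 - p e) * w e := Finset.sum_sdiff hC
  have hsplit2 : (∑ e ∈ E \ C, w e) + ∑ e ∈ C, w e = ∑ e ∈ E, w e :=
    Finset.sum_sdiff hC
  have hsdiff : (∑ e ∈ E \ C, (1 - p e) * w e)
      = (∑ e ∈ E \ C, w e) - ∑ e ∈ E \ C, p e * w e := by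
    rw [← Finset.sum_sub_distrib]
    exact Finset.sum_congr rfl fun e _ => by ring
  have hB1 : (0:ℝ) ≤ B - 1 := by linarith
  have key : ∑ e ∈ E, (1 - p e) * w e
      ≥ (∑ e ∈ E, w e) - (ρ + 1 - η) * ∑ e ∈ C, w e := by
    nlinarith [hfp, hη, hsplit1, hsplit2, hsdiff]
  nlinarith [mul_le_mul_of_nonneg_left key hB1]
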